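/- The Gaussian Q-function satisfies Q(t) = (1/π) ∫_0^{π/2} exp(-t²/(2 sin²x)) dx for all t ≥ 0 (Craig's formula). -/

import Mathlib

open Real MeasureTheory

noncomputable def gaussianQ (t : ℝ) : ℝ :=
  (Real.sqrt (2 * Real.pi))⁻¹ * ∫ u in Set.Ioi t, Real.exp (-u ^ 2 / 2)

namespace CraigAux

open Set Filter

/-- The integrand of the double integral. -/
noncomputable def H (u x : ℝ) : ℝ :=
  (u / Real.sin x ^ 2) * Real.exp (-u ^ 2 / (2 * Real.sin x ^ 2))

lemma sin_pos_of_mem {x : ℝ} (hx : x ∈ Ioo 0 (Real.pi / 2)) : 0 < Real.sin x :=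
  Real.sin_pos_of_pos_of_lt_pi hx.1 (hx.2.trans (half_lt_self Real.pi_pos))

lemma cos_pos_of_mem {x : ℝ} (hx : x ∈ Ioo 0 (Real.pi / 2)) : 0 < Real.cos x :=
  Real.cos_pos_of_mem_Ioo ⟨by linarith [Real.pi_pos, hx.1], hx.2⟩

/-- FTC on the half-line: `∫_t^∞ (u/s) e^{-u²/(2s)} du = e^{-t²/(2s)}`. -/
lemma lemB {s : ℝ} (hs : 0 < s) {t : ℝ} (ht : 0 ≤ t) :
    ∫ u in Ioi t, (u / s) * Real.exp (-u ^ 2 / (2 * s)) = Real.exp (-t ^ 2 / (2 * s)) := by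
  have hderiv : ∀ u ∈ Ici t, HasDerivAt (fun u : ℝ => -Real.exp (-u ^ 2 / (2 * s)))
      ((u / s) * Real.exp (-u ^ 2 / (2 * s))) u := by
    intro u _
    have h1 : HasDerivAt (fun u : ℝ => -u ^ 2 / (2 * s)) (-(2 * u ^ 1) / (2 * s)) u :=
      ((hasDerivAt_pow 2 u).neg).div_const (2 * s)
    have h2 := h1.exp.neg
    refine h2.congr_deriv ?_
    field_simp
  have hnonneg : ∀ u ∈ Ioi t, 0 ≤ (u / s) * Real.exp (-u ^ 2 / (2 * s)) := by
    intro u hu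
    have hu0 : 0 ≤ u := le_of_lt (lt_of_le_of_lt ht hu)
    exact mul_nonneg (div_nonneg hu0 hs.le) (Real.exp_pos _).le
  have htend : Tendsto (fun u : ℝ => -Real.exp (-u ^ 2 / (2 * s))) atTop (nhds 0) := by
    have h3 : Tendsto (fun u : ℝ => u ^ 2 / (2 * s)) atTop atTop :=
      (tendsto_pow_atTop two_ne_zero).atTop_div_const (by positivity)
    have h4 := Real.tendsto_exp_neg_atTop_nhds_zero.comp h3
    have h5 : Tendsto (fun u : ℝ => Real.exp (-u ^ 2 / (2 * s))) atTop (nhds 0) := by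
      refine h4.congr fun u => ?_
      simp [Function.comp, neg_div]
    simpa using h5.neg
  have := integral_Ioi_of_hasDerivAt_of_nonneg' hderiv hnonneg htend
  simpa using this

/-- The substitution map and its derivative. -/
noncomputable def ff (u x : ℝ) : ℝ := u * (Real.cos x / Real.sin x)

noncomputable def ff' (u x : ℝ) : ℝ :=
  u * ((-Real.sin x * Real.sin x - Real.cos x * Real.cos x) / Real.sin x ^ 2)

lemma ff_hasDeriv (u : ℝ) : ∀ x ∈ Ioo 0 (Real.pi / 2),
    HasDerivWithinAt (ff u) (ff' u x) (Ioo 0 (Real.pi / 2)) x := by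
  intro x hx
  have hsin : Real.sin x ≠ 0 := (sin_pos_of_mem hx).ne'
  exact (((Real.hasDerivAt_cos x).div (Real.hasDerivAt_sin x) hsin).const_mul u).hasDerivWithinAt

lemma ff_inj {u : ℝ} (hu : 0 < u) : Set.InjOn (ff u) (Ioo 0 (Real.pi / 2)) := by
  intro a ha b hb hab
  have hsa := sin_pos_of_mem ha
  have hsb := sin_pos_of_mem hb
  have hca := cos_pos_of_mem ha
  have hcb := cos_pos_of_mem hb
  have h1 : Real.cos a / Real.sin a = Real.cos b / Real.sin b := mul_left_cancel₀ hu.ne' hab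
  have h2 : Real.cos a * Real.sin b = Real.cos b * Real.sin a := by
    field_simp [hsa.ne', hsb.ne'] at h1
    linarith
  have h3 : Real.tan a = Real.tan b := by
    rw [Real.tan_eq_sin_div_cos, Real.tan_eq_sin_div_cos]
    field_simp [hca.ne', hcb.ne']
    linear_combination -h2
  exact Real.injOn_tan ⟨by linarith [Real.pi_pos, ha.1], ha.2⟩
    ⟨by linarith [Real.pi_pos, hb.1], hb.2⟩ h3

lemma ff_image {u : ℝ} (hu : 0 < u) : ff u '' Ioo 0 (Real.pi / 2) = Ioi (0 : ℝ) := by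
  apply Set.eq_of_subset_of_subset
  · rintro _ ⟨x, hx, rfl⟩
    exact mul_pos hu (div_pos (cos_pos_of_mem hx) (sin_pos_of_mem hx))
  · rintro v hv
    have hv' : (0 : ℝ) < v := hv
    have hq : 0 < u / v := div_pos hu hv'
    have hθpos : 0 < Real.arctan (u / v) := by
      have := Real.arctan_strictMono hq
      simpa [Real.arctan_zero] using this
    refine ⟨Real.arctan (u / v), ⟨hθpos, Real.arctan_lt_pi_div_two _⟩, ?_⟩
    have hcos := Real.cos_arctan_pos (u / v)
    have hsin : 0 < Real.sin (Real.arctan (u / v)) := by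
      rw [Real.sin_arctan]
      positivity
    have htan : Real.tan (Real.arctan (u / v)) = u / v := Real.tan_arctan _
    rw [Real.tan_eq_sin_div_cos] at htan
    have h2 : Real.sin (Real.arctan (u / v)) * v = u * Real.cos (Real.arctan (u / v)) := by
      field_simp [hcos.ne', hv'.ne'] at htan
      linarith
    show u * (Real.cos (Real.arctan (u / v)) / Real.sin (Real.arctan (u / v))) = v
    field_simp [hsin.ne']
    linear_combination -h2

lemma ff_pointwise {u : ℝ} (hu : 0 < u) {x : ℝ} (hx : x ∈ Ioo 0 (Real.pi / 2)) :
    |ff' u x| • Real.exp (-(u ^ 2 + (ff u x) ^ 2) / 2) = H u x := by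
  have hsa := sin_pos_of_mem hx
  have hpyth := Real.sin_sq_add_cos_sq x
  have e1 : ff' u x = -(u / Real.sin x ^ 2) := by
    unfold ff'
    have h : -Real.sin x * Real.sin x - Real.cos x * Real.cos x = -1 := by nlinarith
    rw [h]; ring
  have e2 : -(u ^ 2 + (ff u x) ^ 2) / 2 = -u ^ 2 / (2 * Real.sin x ^ 2) := by
    unfold ff
    field_simp
    linear_combination (-1) * hpyth
  rw [e1, abs_neg, abs_of_pos (by positivity), e2, smul_eq_mul]
  rfl

lemma gauss_integrable (u : ℝ) :
    IntegrableOn (fun v => Real.exp (-(u ^ 2 + v ^ 2) / 2)) (Ioi (0 : ℝ)) := by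
  have heq : (fun v : ℝ => Real.exp (-(u ^ 2 + v ^ 2) / 2)) =
      fun v : ℝ => Real.exp (-u ^ 2 / 2) * Real.exp (-(1 / 2 : ℝ) * v ^ 2) := by
    funext v
    rw [← Real.exp_add]
    congr 1
    ring
  rw [heq]
  exact ((integrable_exp_neg_mul_sq (by norm_num : (0:ℝ) < 1/2)).const_mul _).integrableOn

/-- Change of variables: the inner `x`-integral equals a Gaussian integral. -/
lemma lemA {u : ℝ} (hu : 0 < u) :
    ∫ x in Ioo 0 (Real.pi / 2), H u x = ∫ v in Ioi (0 : ℝ), Real.exp (-(u ^ 2 + v ^ 2) / 2) := by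
  rw [← ff_image hu,
    integral_image_eq_integral_abs_deriv_smul measurableSet_Ioo (ff_hasDeriv u) (ff_inj hu)]
  exact (setIntegral_congr_fun measurableSet_Ioo fun x hx => ff_pointwise hu hx).symm

lemma lemA_int {u : ℝ} (hu : 0 < u) : IntegrableOn (H u) (Ioo 0 (Real.pi / 2)) := by
  have h := (integrableOn_image_iff_integrableOn_abs_deriv_smul measurableSet_Ioo
    (ff_hasDeriv u) (ff_inj hu) (fun v => Real.exp (-(u ^ 2 + v ^ 2) / 2))).mp
    (by rw [ff_image hu]; exact gauss_integrable u)
  exact h.congr_fun (fun x hx => ff_pointwise hu hx) measurableSet_Ioo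

lemma lemC (u : ℝ) : ∫ v in Ioi (0 : ℝ), Real.exp (-(u ^ 2 + v ^ 2) / 2) =
    Real.sqrt (2 * Real.pi) / 2 * Real.exp (-u ^ 2 / 2) := by
  have heq : (fun v : ℝ => Real.exp (-(u ^ 2 + v ^ 2) / 2)) =
      fun v : ℝ => Real.exp (-u ^ 2 / 2) * Real.exp (-(1 / 2 : ℝ) * v ^ 2) := by
    funext v
    rw [← Real.exp_add]
    congr 1
    ring
  rw [heq, integral_const_mul, integral_gaussian_Ioi,
    show Real.pi / (1 / 2 : ℝ) = 2 * Real.pi by ring]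
  ring

lemma H_nonneg {u : ℝ} (hu : 0 ≤ u) (x : ℝ) : 0 ≤ H u x :=
  mul_nonneg (div_nonneg hu (sq_nonneg _)) (Real.exp_pos _).le

lemma H_meas : Measurable (Function.uncurry H) := by
  unfold H Function.uncurry
  fun_prop

end CraigAux

open CraigAux Set Filter in
theorem stmt_4 (t : ℝ) (ht : 0 ≤ t) :
    gaussianQ t =
      (1 / Real.pi) * ∫ x in (0 : ℝ)..(Real.pi / 2),
        Real.exp (-t ^ 2 / (2 * Real.sin x ^ 2)) := by
  have hπ := Real.pi_pos
  rw [intervalIntegral.integral_of_le (by positivity : (0:ℝ) ≤ Real.pi / 2),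
    integral_Ioc_eq_integral_Ioo]
  -- Fubini setup
  have hmeas : AEStronglyMeasurable (Function.uncurry H)
      ((volume.restrict (Ioi t)).prod (volume.restrict (Ioo 0 (Real.pi / 2)))) :=
    H_meas.aestronglyMeasurable
  have hsec : ∀ᵐ u ∂(volume.restrict (Ioi t)),
      Integrable (fun x => H u x) (volume.restrict (Ioo 0 (Real.pi / 2))) := by
    filter_upwards [ae_restrict_mem measurableSet_Ioi] with u hu
    exact lemA_int (lt_of_le_of_lt ht hu)
  have hnorm : Integrable
      (fun u => ∫ x in Ioo 0 (Real.pi / 2), ‖H u x‖) (volume.restrict (Ioi t)) := by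
    have hbase : Integrable
        (fun u : ℝ => Real.sqrt (2 * Real.pi) / 2 * Real.exp (-u ^ 2 / 2))
        (volume.restrict (Ioi t)) := by
      have heq : (fun u : ℝ => Real.sqrt (2 * Real.pi) / 2 * Real.exp (-u ^ 2 / 2)) =
          fun u : ℝ => Real.sqrt (2 * Real.pi) / 2 * Real.exp (-(1 / 2 : ℝ) * u ^ 2) := by
        funext u; congr 1; congr 1; ring
      rw [heq]
      exact (((integrable_exp_neg_mul_sq (by norm_num : (0:ℝ) < 1/2)).const_mul
        _).restrict)
    refine hbase.congr ?_
    filter_upwards [ae_restrict_mem measurableSet_Ioi] with u hu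
    have hu0 : 0 < u := lt_of_le_of_lt ht hu
    have : (fun x => ‖H u x‖) = fun x => H u x := by
      funext x
      exact Real.norm_of_nonneg (H_nonneg hu0.le x)
    rw [this, lemA hu0, lemC]
  have hint : Integrable (Function.uncurry H)
      ((volume.restrict (Ioi t)).prod (volume.restrict (Ioo 0 (Real.pi / 2)))) :=
    (integrable_prod_iff hmeas).mpr ⟨hsec, hnorm⟩
  have hswap := integral_integral_swap hint
  -- chain of equalities
  have key : ∫ x in Ioo 0 (Real.pi / 2), Real.exp (-t ^ 2 / (2 * Real.sin x ^ 2)) =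
      Real.pi * gaussianQ t := by
    have step1 : ∫ x in Ioo 0 (Real.pi / 2), Real.exp (-t ^ 2 / (2 * Real.sin x ^ 2)) =
        ∫ x in Ioo 0 (Real.pi / 2), ∫ u in Ioi t, H u x := by
      refine setIntegral_congr_fun measurableSet_Ioo fun x hx => ?_
      exact (lemB (pow_pos (sin_pos_of_mem hx) 2) ht).symm
    have step3 : ∫ u in Ioi t, ∫ x in Ioo 0 (Real.pi / 2), H u x =
        ∫ u in Ioi t, Real.sqrt (2 * Real.pi) / 2 * Real.exp (-u ^ 2 / 2) := by
      refine setIntegral_congr_fun measurableSet_Ioi fun u hu => ?_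
      rw [lemA (lt_of_le_of_lt ht hu), lemC]
    have step4 : ∫ u in Ioi t, Real.sqrt (2 * Real.pi) / 2 * Real.exp (-u ^ 2 / 2) =
        Real.pi * gaussianQ t := by
      rw [integral_const_mul, gaussianQ]
      have h2 : Real.sqrt (2 * Real.pi) * Real.sqrt (2 * Real.pi) = 2 * Real.pi :=
        Real.mul_self_sqrt (by positivity)
      have hs0 : (0:ℝ) < Real.sqrt (2 * Real.pi) := Real.sqrt_pos.mpr (by positivity)
      have h3 : Real.pi / Real.sqrt (2 * Real.pi) = Real.sqrt (2 * Real.pi) / 2 := by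
        rw [div_eq_div_iff hs0.ne' (two_ne_zero)]
        linarith [h2]
      calc Real.sqrt (2 * Real.pi) / 2 * ∫ u in Ioi t, Real.exp (-u ^ 2 / 2)
          = Real.pi / Real.sqrt (2 * Real.pi) * ∫ u in Ioi t, Real.exp (-u ^ 2 / 2) := by
            rw [h3]
        _ = Real.pi * ((Real.sqrt (2 * Real.pi))⁻¹ * ∫ u in Ioi t, Real.exp (-u ^ 2 / 2)) := by
            ring
    rw [step1, hswap.symm, step3, step4]
  rw [key, ← mul_assoc, one_div, inv_mul_cancel₀ hπ.ne', one_mul]
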